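/- Let $\varphi$ be a map whose branches $\zeta$ are diffeomorphisms with bounded distortion, such that $|\{x : |\varphi'(x)| > e^t\}| < Ce^{-\alpha t}$ for all $t > 0$, with $C > 0$ and $\alpha \in (0,1)$. Then there is a constant $C'$ (depending on $C$ and the distortion bound $C_1$, where $\sup|\zeta'| \leq e^{C_1}\inf|\zeta'|$ on each branch) such that for every $n \geq 1$, the number $N$ of branches $\zeta$ with $\inf |\zeta'| \in [e^n, e^{n+1}]$ satisfies $N \leq C' e^{n(1 - \alpha)}$. -/

import Mathlib

open MeasureTheory
open scoped ENNReal NNReal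

set_option maxHeartbeats 2000000 in
/-- Branch counting from exponential tails: if the branches of `φ` (with pairwise
disjoint domains `D i`, each mapped bijectively onto a set `X` of measure `1`) have
distortion bounded by `C₁` and `|{|φ'| > e^t}| < C e^{-αt}` for all `t > 0`, then
the number of branches with `inf |ζ'| ∈ [e^n, e^{n+1}]` is at most `C' e^{n(1-α)}`. -/
theorem stmt_14 (C C₁ α : ℝ) (hC : 0 < C) (hC₁ : 0 < C₁) (hα0 : 0 < α) (hα1 : α < 1) :
    ∃ C' : ℝ, 0 < C' ∧
      ∀ (ι : Type) (D : ι → Set ℝ) (φ : ℝ → ℝ) (X : Set ℝ),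
        Pairwise (Function.onFun Disjoint D) →
        volume X = 1 →
        (∀ i, Set.BijOn φ (D i) X) →
        (∀ i, ∀ x ∈ D i, DifferentiableAt ℝ φ x) →
        (∀ i, ∀ x ∈ D i, ∀ y ∈ D i, |deriv φ x| ≤ Real.exp C₁ * |deriv φ y|) →
        (∀ t : ℝ, 0 < t →
          volume {x ∈ ⋃ i, D i | Real.exp t < |deriv φ x|}
            < ENNReal.ofReal (C * Real.exp (-α * t))) →
        ∀ n : ℕ, 1 ≤ n →
          ∀ s : Finset ι,
            (∀ i ∈ s, sInf ((fun x => |deriv φ x|) '' D i)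
              ∈ Set.Icc (Real.exp n) (Real.exp (n + 1))) →
            (s.card : ℝ) ≤ C' * Real.exp (n * (1 - α)) := by
  refine ⟨2 * C * Real.exp (C₁ + 3), by positivity, ?_⟩
  intro ι D φ X hD hX hbij hdiff hdist htail n hn s hs
  classical
  have hn1 : (1 : ℝ) ≤ (n : ℝ) := by exact_mod_cast hn
  set en : ℝ := Real.exp n with hen_def
  have hen0 : (0 : ℝ) < en := Real.exp_pos _
  set Λ : ℝ := Real.exp (C₁ + n + 2) with hΛ_def
  have hΛ0 : (0 : ℝ) < Λ := Real.exp_pos _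
  have henΛ : en ≤ Λ := Real.exp_le_exp.2 (by linarith)
  -- nonemptiness
  have hXne : X.Nonempty := by
    apply nonempty_of_measure_ne_zero (μ := volume)
    simp [hX]
  have hDne : ∀ i, (D i).Nonempty := by
    intro i
    obtain ⟨x, hx⟩ := hXne
    obtain ⟨u, hu, -⟩ := (hbij i).surjOn hx
    exact ⟨u, hu⟩
  -- derivative bounds on branches in `s`
  have hlow : ∀ i ∈ s, ∀ u ∈ D i, en ≤ |deriv φ u| := by
    intro i hi u hu
    have h1 := (hs i hi).1
    have h2 : sInf ((fun x => |deriv φ x|) '' D i) ≤ |deriv φ u| := by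
      apply csInf_le
      · exact ⟨0, by rintro y ⟨v, hv, rfl⟩; exact abs_nonneg _⟩
      · exact ⟨u, hu, rfl⟩
    exact h1.trans h2
  have hup : ∀ i ∈ s, ∀ u ∈ D i, |deriv φ u| ≤ Λ := by
    intro i hi u hu
    have h2 := (hs i hi).2
    have hne : ((fun x => |deriv φ x|) '' D i).Nonempty := (hDne i).image _
    have hlt : sInf ((fun x => |deriv φ x|) '' D i) < Real.exp ((n : ℝ) + 1) + 1 := by
      have : (0:ℝ) < 1 := one_pos
      linarith [h2]
    obtain ⟨v, hv, hvlt⟩ := exists_lt_of_csInf_lt hne hlt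
    obtain ⟨y, hy, rfl⟩ := hv
    have hbound := hdist i u hu y hy
    have hth : Real.exp ((n : ℝ) + 1) + 1 ≤ Real.exp ((n : ℝ) + 2) := by
      have h1 : Real.exp ((n : ℝ) + 2) = Real.exp ((n : ℝ) + 1) * Real.exp 1 := by
        rw [← Real.exp_add]; ring_nf
      have h2 : (2 : ℝ) ≤ Real.exp 1 := by
        have := Real.add_one_le_exp (1 : ℝ); linarith
      have h3 : (1 : ℝ) ≤ Real.exp ((n : ℝ) + 1) := Real.one_le_exp (by linarith)
      nlinarith
    have : |deriv φ u| ≤ Real.exp C₁ * (Real.exp ((n : ℝ) + 1) + 1) := by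
      have hC₁pos := Real.exp_pos C₁
      nlinarith [abs_nonneg (deriv φ y)]
    calc |deriv φ u| ≤ Real.exp C₁ * (Real.exp ((n : ℝ) + 1) + 1) := this
      _ ≤ Real.exp C₁ * Real.exp ((n : ℝ) + 2) := by
          have := Real.exp_pos C₁; nlinarith
      _ = Λ := by rw [hΛ_def, ← Real.exp_add]; ring_nf
  -- the union of the branches in `s`
  set U : Set ℝ := ⋃ i ∈ s, D i with hU_def
  have hUmem : ∀ u ∈ U, ∃ i ∈ s, u ∈ D i := by
    intro u hu
    simpa using Set.mem_iUnion₂.1 hu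
  have hUlow : ∀ u ∈ U, en ≤ |deriv φ u| := by
    intro u hu; obtain ⟨i, hi, hui⟩ := hUmem u hu; exact hlow i hi u hui
  have hUup : ∀ u ∈ U, |deriv φ u| ≤ Λ := by
    intro u hu; obtain ⟨i, hi, hui⟩ := hUmem u hu; exact hup i hi u hui
  -- the tail set
  set T : Set ℝ := {x ∈ ⋃ i, D i | Real.exp ((n : ℝ) - 1/2) < |deriv φ x|} with hT_def
  have hUT : U ⊆ T := by
    intro u hu
    obtain ⟨i, hi, hui⟩ := hUmem u hu
    refine ⟨Set.mem_iUnion.2 ⟨i, hui⟩, ?_⟩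
    have h1 := hUlow u hu
    have h2 : Real.exp ((n : ℝ) - 1/2) < en := Real.exp_lt_exp.2 (by linarith)
    linarith
  have hTvol : volume T ≤ ENNReal.ofReal (C * Real.exp (-α * ((n : ℝ) - 1/2))) :=
    (htail _ (by linarith)).le
  -- linearization sets
  set E : ℕ → Set ℝ := fun k =>
    {u | ∀ y : ℝ, |y - u| ≤ 1 / ((k : ℝ) + 1) →
      |φ y - φ u - deriv φ u * (y - u)| ≤ en / 2 * |y - u|} with hE_def
  have hEmono : Monotone E := by
    intro k k' hkk' u hu y hy
    apply hu y
    refine hy.trans ?_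
    apply one_div_le_one_div_of_le (by positivity)
    have : (k : ℝ) ≤ (k' : ℝ) := by exact_mod_cast hkk'
    linarith
  have hEcover : ∀ u ∈ U, ∃ k, u ∈ E k := by
    intro u hu
    obtain ⟨i, hi, hui⟩ := hUmem u hu
    have hd : HasDerivAt φ (deriv φ u) u := (hdiff i u hui).hasDerivAt
    have ho := hasDerivAt_iff_isLittleO.1 hd
    have hb := ho.def (show (0 : ℝ) < en / 2 by positivity)
    rw [Metric.eventually_nhds_iff] at hb
    obtain ⟨ε, hε, hball⟩ := hb
    obtain ⟨k, hk⟩ := exists_nat_one_div_lt hε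
    refine ⟨k, ?_⟩
    intro y hy
    have hdy : dist y u < ε := by
      rw [Real.dist_eq]; exact lt_of_le_of_lt hy hk
    have := hball hdy
    simpa [Real.norm_eq_abs, smul_eq_mul, mul_comm] using this
  -- the good fiber sets
  set Xk : ℕ → Set ℝ := fun k => ⋂ i ∈ s, φ '' (D i ∩ E k) with hXk_def
  have hXkmono : Monotone Xk := by
    intro k k' hkk'
    apply Set.iInter₂_mono
    intro i hi
    exact Set.image_mono (Set.inter_subset_inter_right _ (hEmono hkk'))
  have hXcover : X ⊆ ⋃ k, Xk k := by
    intro x hx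
    have h1 : ∀ i : ι, ∃ k : ℕ, i ∈ s → x ∈ φ '' (D i ∩ E k) := by
      intro i
      by_cases hi : i ∈ s
      · obtain ⟨u, hu, hux⟩ := (hbij i).surjOn hx
        have huU : u ∈ U := Set.mem_biUnion hi hu
        obtain ⟨k, hk⟩ := hEcover u huU
        exact ⟨k, fun _ => ⟨u, ⟨hu, hk⟩, hux⟩⟩
      · exact ⟨0, fun h => absurd h hi⟩
    choose f hf using h1
    refine Set.mem_iUnion.2 ⟨s.sup f, ?_⟩
    refine Set.mem_iInter₂.2 fun i hi => ?_
    have := hf i hi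
    exact Set.image_mono
      (Set.inter_subset_inter_right _ (hEmono (Finset.le_sup hi))) this
  have hXvol : (1 : ℝ≥0∞) ≤ ⨆ k, volume (Xk k) := by
    calc (1 : ℝ≥0∞) = volume X := hX.symm
      _ ≤ volume (⋃ k, Xk k) := measure_mono hXcover
      _ = ⨆ k, volume (Xk k) := Directed.measure_iUnion (hXkmono.directed_le)
  -- the key per-scale bound
  have key : ∀ k : ℕ, (s.card : ℝ≥0∞) * volume (Xk k) ≤
      ENNReal.ofReal (2 * Λ) * volume T := by
    intro k
    set c : ℝ := (k : ℝ) + 1 with hc_def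
    have hc : (0 : ℝ) < c := by positivity
    set I : ℤ → Set ℝ := fun j => {u : ℝ | ⌊u * c⌋ = j} with hI_def
    have hIIco : ∀ j : ℤ, I j = Set.Ico ((j : ℝ) / c) (((j : ℝ) + 1) / c) := by
      intro j
      ext u
      simp only [hI_def, Set.mem_setOf_eq, Set.mem_Ico]
      constructor
      · intro hu
        have h := Int.floor_eq_iff.1 hu
        refine ⟨(div_le_iff₀ hc).2 (by linarith [h.1]), (lt_div_iff₀ hc).2 ?_⟩
        have := h.2
        push_cast at this
        linarith
      · intro hu
        have h1 : (j : ℝ) ≤ u * c := by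
          have := hu.1
          rw [div_le_iff₀ hc] at this
          linarith
        have h2 : u * c < (j : ℝ) + 1 := by
          have := hu.2
          rw [lt_div_iff₀ hc] at this
          linarith
        refine Int.floor_eq_iff.2 ⟨h1, by push_cast; linarith⟩
    have hImeas : ∀ j, MeasurableSet (I j) := by
      intro j; rw [hIIco]; exact measurableSet_Ico
    have hIdiam : ∀ j : ℤ, ∀ u ∈ I j, ∀ u' ∈ I j, |u - u'| ≤ 1 / c := by
      intro j u hu u' hu'
      have hff : ⌊u * c⌋ = ⌊u' * c⌋ := hu.trans hu'.symm
      have h1 : |u * c - u' * c| < 1 := Int.abs_sub_lt_one_of_floor_eq_floor hff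
      have h2 : u * c - u' * c = (u - u') * c := by ring
      rw [h2, abs_mul, abs_of_pos hc] at h1
      exact le_of_lt ((lt_div_iff₀ hc).2 (by linarith))
    set S : ℤ → Set ℝ := fun j => (U ∩ E k) ∩ I j with hS_def
    -- Lipschitz bound on each piece
    have hlip : ∀ j, LipschitzOnWith (Real.toNNReal (2 * Λ)) φ (S j) := by
      intro j
      rw [lipschitzOnWith_iff_dist_le_mul]
      rintro u ⟨⟨huU, huE⟩, huI⟩ u' ⟨⟨hu'U, hu'E⟩, hu'I⟩
      have hdm : |u' - u| ≤ 1 / c := hIdiam j u' hu'I u huI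
      have hb := huE u' (by simpa [hc_def] using hdm)
      have h3 : |deriv φ u| ≤ Λ := hUup u huU
      rw [Real.dist_eq, Real.dist_eq, Real.coe_toNNReal _ (by positivity)]
      calc |φ u - φ u'| = |φ u' - φ u| := abs_sub_comm _ _
        _ = |(φ u' - φ u - deriv φ u * (u' - u)) + deriv φ u * (u' - u)| := by ring_nf
        _ ≤ |φ u' - φ u - deriv φ u * (u' - u)| + |deriv φ u * (u' - u)| := abs_add_le _ _
        _ ≤ en / 2 * |u' - u| + |deriv φ u| * |u' - u| := by
            rw [abs_mul]; exact add_le_add hb le_rfl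
        _ ≤ 2 * Λ * |u' - u| := by nlinarith [abs_nonneg (u' - u)]
        _ = 2 * Λ * |u - u'| := by rw [abs_sub_comm]
    have himg : ∀ j, volume (φ '' S j) ≤ ENNReal.ofReal (2 * Λ) * volume (S j) := by
      intro j
      have h := (hlip j).hausdorffMeasure_image_le (zero_le_one)
      rw [MeasureTheory.hausdorffMeasure_real, ENNReal.rpow_one] at h
      simpa [ENNReal.ofReal] using h
    -- summing the pieces
    have hsum : ∑' j : ℤ, volume (S j) ≤ volume T := by
      set H : Set ℝ := toMeasurable volume T with hH_def
      have hHmeas : MeasurableSet H := measurableSet_toMeasurable _ _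
      have h1 : ∀ j, volume (S j) ≤ volume (H ∩ I j) := by
        intro j
        apply measure_mono
        rintro u ⟨⟨huU, -⟩, huI⟩
        exact ⟨subset_toMeasurable _ _ (hUT huU), huI⟩
      calc ∑' j : ℤ, volume (S j) ≤ ∑' j : ℤ, volume (H ∩ I j) := ENNReal.tsum_le_tsum h1
        _ = volume (⋃ j, H ∩ I j) := by
            refine (measure_iUnion ?_ fun j => hHmeas.inter (hImeas j)).symm
            intro j j' hjj'
            refine Set.disjoint_left.2 ?_
            rintro u ⟨-, hu⟩ ⟨-, hu'⟩
            exact hjj' (hu.symm.trans hu')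
        _ ≤ volume H := measure_mono (Set.iUnion_subset fun j => Set.inter_subset_left)
        _ = volume T := measure_toMeasurable _
    -- multiplicity: each point of `Xk k` lies in `s.card` many images
    set G : ℤ → Set ℝ := fun j => toMeasurable volume (φ '' S j) with hG_def
    set F : ℝ → ℝ≥0∞ := fun x => ∑' j : ℤ, (G j).indicator (fun _ => (1 : ℝ≥0∞)) x
      with hF_def
    have hFmeas : Measurable F := by
      apply Measurable.ennreal_tsum
      intro j
      exact measurable_const.indicator (measurableSet_toMeasurable _ _)
    have hmult : ∀ x ∈ Xk k, (s.card : ℝ≥0∞) ≤ F x := by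
      intro x hx
      have hex : ∀ i : {i // i ∈ s}, ∃ u, (u ∈ D i.1 ∧ u ∈ E k) ∧ φ u = x := by
        rintro ⟨i, hi⟩
        have := Set.mem_iInter₂.1 hx i hi
        obtain ⟨u, ⟨hu1, hu2⟩, hu3⟩ := this
        exact ⟨u, ⟨hu1, hu2⟩, hu3⟩
      choose u hu hφu using hex
      set g : {i // i ∈ s} → ℤ := fun i => ⌊u i * c⌋ with hg_def
      have hginj : Function.Injective g := by
        intro i i' hgii'
        have hIm : u i ∈ I (g i) := rfl
        have hIm' : u i' ∈ I (g i) := hgii'.symm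
        have hdm : |u i' - u i| ≤ 1 / c := hIdiam _ _ hIm' _ hIm
        have huu : u i = u i' := by
          by_contra hne
          have hEi := (hu i).2
          have hb := hEi (u i') (by simpa [hc_def] using hdm)
          rw [hφu i', hφu i] at hb
          have h0 : (0 : ℝ) < |u i' - u i| := by
            apply abs_pos.2
            intro h
            exact hne (sub_eq_zero.1 h).symm
          have hder : en ≤ |deriv φ (u i)| :=
            hlow i.1 i.2 (u i) (hu i).1
          rw [sub_self, zero_sub, abs_neg, abs_mul] at hb
          nlinarith
        rcases eq_or_ne i.1 i'.1 with h | h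
        · exact Subtype.ext h
        · exfalso
          have hdisj := hD h
          exact Set.disjoint_left.1 hdisj (hu i).1 (huu ▸ (hu i').1)
      have hcard : (s.attach.image g).card = s.card := by
        rw [Finset.card_image_of_injective _ hginj, Finset.card_attach]
      have hxG : ∀ j ∈ s.attach.image g,
          (G j).indicator (fun _ => (1 : ℝ≥0∞)) x = 1 := by
        intro j hj
        obtain ⟨i, -, rfl⟩ := Finset.mem_image.1 hj
        have hxV : x ∈ φ '' S (g i) := by
          refine ⟨u i, ⟨⟨?_, (hu i).2⟩, rfl⟩, hφu i⟩
          exact Set.mem_biUnion i.2 (hu i).1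
        have : x ∈ G (g i) := subset_toMeasurable _ _ hxV
        simp [Set.indicator_of_mem this]
      calc (s.card : ℝ≥0∞) = ∑ j ∈ s.attach.image g,
            (G j).indicator (fun _ => (1 : ℝ≥0∞)) x := by
            rw [Finset.sum_congr rfl hxG]
            simp [hcard]
        _ ≤ F x := Summable.sum_le_tsum _ (fun j _ => zero_le) ENNReal.summable
    -- Markov inequality
    have hmarkov : (s.card : ℝ≥0∞) * volume (Xk k) ≤ ∫⁻ x, F x := by
      have h1 : volume (Xk k) ≤ volume {x | (s.card : ℝ≥0∞) ≤ F x} :=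
        measure_mono hmult
      calc (s.card : ℝ≥0∞) * volume (Xk k)
          ≤ (s.card : ℝ≥0∞) * volume {x | (s.card : ℝ≥0∞) ≤ F x} :=
            mul_le_mul_right h1 _
        _ ≤ ∫⁻ x, F x := mul_meas_ge_le_lintegral₀ hFmeas.aemeasurable _
    have hlint : ∫⁻ x, F x = ∑' j : ℤ, volume (G j) := by
      rw [hF_def, lintegral_tsum]
      · congr 1
        ext j
        exact lintegral_indicator_one (measurableSet_toMeasurable _ _)
      · intro j
        exact (measurable_const.indicator (measurableSet_toMeasurable _ _)).aemeasurable
    have hGvol : ∀ j, volume (G j) = volume (φ '' S j) := fun j =>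
      measure_toMeasurable _
    calc (s.card : ℝ≥0∞) * volume (Xk k) ≤ ∫⁻ x, F x := hmarkov
      _ = ∑' j : ℤ, volume (G j) := hlint
      _ = ∑' j : ℤ, volume (φ '' S j) := by simp_rw [hGvol]
      _ ≤ ∑' j : ℤ, ENNReal.ofReal (2 * Λ) * volume (S j) := ENNReal.tsum_le_tsum himg
      _ = ENNReal.ofReal (2 * Λ) * ∑' j : ℤ, volume (S j) := ENNReal.tsum_mul_left
      _ ≤ ENNReal.ofReal (2 * Λ) * volume T := mul_le_mul_right hsum _
  -- assemble
  have hfinal : (s.card : ℝ≥0∞) ≤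
      ENNReal.ofReal (2 * Λ) * ENNReal.ofReal (C * Real.exp (-α * ((n : ℝ) - 1/2))) := by
    calc (s.card : ℝ≥0∞) = (s.card : ℝ≥0∞) * 1 := (mul_one _).symm
      _ ≤ (s.card : ℝ≥0∞) * ⨆ k, volume (Xk k) := mul_le_mul_right hXvol _
      _ = ⨆ k, (s.card : ℝ≥0∞) * volume (Xk k) := by rw [ENNReal.mul_iSup]
      _ ≤ ENNReal.ofReal (2 * Λ) * ENNReal.ofReal (C * Real.exp (-α * ((n : ℝ) - 1/2))) :=
          iSup_le fun k => (key k).trans (mul_le_mul_right hTvol _)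
  have hreal : (s.card : ℝ) ≤ 2 * Λ * (C * Real.exp (-α * ((n : ℝ) - 1/2))) := by
    have h1 : ((s.card : ℝ≥0∞)) = ENNReal.ofReal (s.card : ℝ) := by
      rw [ENNReal.ofReal_natCast]
    rw [h1, ← ENNReal.ofReal_mul (by positivity)] at hfinal
    exact (ENNReal.ofReal_le_ofReal_iff (by positivity)).1 hfinal
  refine hreal.trans ?_
  have hexp : 2 * Λ * (C * Real.exp (-α * ((n : ℝ) - 1/2))) =
      2 * C * Real.exp ((C₁ + (n : ℝ) + 2) + (-α * ((n : ℝ) - 1/2))) := by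
    rw [hΛ_def]; simp only [Real.exp_add]; ring
  have hexp2 : 2 * C * Real.exp (C₁ + 3) * Real.exp ((n : ℝ) * (1 - α)) =
      2 * C * Real.exp ((C₁ + 3) + (n : ℝ) * (1 - α)) := by
    simp only [Real.exp_add]; ring
  rw [hexp, hexp2]
  have hle : (C₁ + (n : ℝ) + 2) + (-α * ((n : ℝ) - 1/2)) ≤ (C₁ + 3) + (n : ℝ) * (1 - α) := by
    nlinarith
  have := Real.exp_le_exp.2 hle
  nlinarith [Real.exp_pos ((C₁ + (n : ℝ) + 2) + (-α * ((n : ℝ) - 1/2)))]
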